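/- Landau–Toeplitz inequalities for the regular n-diameter: Let n ≥ 2 be an integer and let f(q) = ∑_{m≥0} q^m a_m be a slice regular function on 𝔹 such that d̃_n(f(𝔹)) = d_n(𝔹). Then d̃_n(f(r𝔹)) ≤ d_n(r𝔹) = d_n(𝔹)·r for every r ∈ (0,1), and |a₁| ≤ 1 (i.e. |∂_c f(0)| ≤ 1). -/

import Mathlib

noncomputable section

open Filter Metric Set ENNReal

local notation "ℍ" => Quaternion ℝ

/-- Cauchy convolution of coefficient sequences (coefficients of the `*`-product). -/
def convH (b c : ℕ → ℍ) : ℕ → ℍ := fun m => ∑ i ∈ Finset.range (m + 1), b i * c (m - i)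

/-- Coefficient sequence of the constant function `1` (identity for convolution). -/
def deltaH : ℕ → ℍ := fun m => if m = 0 then 1 else 0

/-- The pairs `(j,k)` with `j < k` in `Fin n`, listed in lexicographic order. -/
def pairList (n : ℕ) : List (Fin n × Fin n) :=
  (((List.finRange n).flatMap fun j => (List.finRange n).map fun k => (j, k)).filter
    fun p => decide (p.1 < p.2))

/-- The coefficient sequence of the `*`-product `∏*_{1≤j<k≤n} (f_{w_k} - f_{w_j})`,
taken in lexicographic order on the pairs `(j,k)`: the `m`-th coefficient of each factor
`f_{w_k} - f_{w_j}` is `(w_k^m - w_j^m) a_m`, and the coefficients of the `*`-product are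
the iterated ordered Cauchy convolutions. -/
def starCoeff (a : ℕ → ℍ) {n : ℕ} (w : Fin n → ℍ) : ℕ → ℍ :=
  (pairList n).foldr
    (fun p acc => convH (fun m => (w p.2 ^ m - w p.1 ^ m) * a m) acc) deltaH

/-- The regular `n`-diameter
`d̃_n(f(r𝔹)) = max_{w₁,…,w_n ∈ 𝔹̄} max_{|q| ≤ r} |(*-product)(q)|^{2/(n(n−1))}`. -/
def regDiamN (n : ℕ) (a : ℕ → ℍ) (r : ℝ) : ℝ :=
  sSup {x : ℝ | ∃ w : Fin n → ℍ, (∀ i, ‖w i‖ ≤ 1) ∧ ∃ q : ℍ, ‖q‖ ≤ r ∧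
    x = ‖∑' m : ℕ, q ^ m * starCoeff a w m‖ ^ (2 / ((n : ℝ) * ((n : ℝ) - 1)))}

/-- The `n`-diameter of a subset `E ⊆ ℍ`:
`d_n(E) = sup_{w₁,…,w_n ∈ E} (∏_{1 ≤ j < k ≤ n} |w_k − w_j|)^{2/(n(n−1))}`. -/
def nDiamReal (n : ℕ) (E : Set ℍ) : ℝ :=
  sSup {x : ℝ | ∃ w : Fin n → ℍ, (∀ i, w i ∈ E) ∧
    x = (∏ p ∈ Finset.univ.filter (fun p : Fin n × Fin n => p.1 < p.2), ‖w p.2 - w p.1‖) ^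
      (2 / ((n : ℝ) * ((n : ℝ) - 1)))}

/-! ### Auxiliary results -/

lemma exists_slice (q : ℍ) :
    ∃ φ : ℂ →ₐ[ℝ] ℍ, (∀ z : ℂ, ‖φ z‖ = ‖z‖) ∧ ∃ z : ℂ, φ z = q := by
  have key : ∀ I : ℍ, I.re = 0 → I.imI ^ 2 + I.imJ ^ 2 + I.imK ^ 2 = 1 →
      ∃ φ : ℂ →ₐ[ℝ] ℍ, (∀ z : ℂ, ‖φ z‖ = ‖z‖) ∧
        ∀ x y : ℝ, φ ⟨x, y⟩ = (x : ℍ) + y • I := by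
    intro I hre h1
    have hI : I * I = -1 := by
      ext <;> simp [Quaternion.re_mul, Quaternion.imI_mul, Quaternion.imJ_mul,
        Quaternion.imK_mul, hre, Quaternion.re_one, Quaternion.imI_one, Quaternion.imJ_one,
        Quaternion.imK_one] <;> nlinarith [h1]
    refine ⟨Complex.liftAux I hI, ?_, ?_⟩
    · intro z
      rw [Complex.liftAux_apply]
      have hns : Quaternion.normSq ((algebraMap ℝ ℍ z.re) + z.im • I) = z.re ^ 2 + z.im ^ 2 := by
        rw [Quaternion.normSq_def']
        simp [Quaternion.re_smul, Quaternion.imI_smul, Quaternion.imJ_smul,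
          Quaternion.imK_smul, hre]
        ring_nf
        nlinarith [h1]
      have : ‖(algebraMap ℝ ℍ z.re) + z.im • I‖ ^ 2 = z.re ^ 2 + z.im ^ 2 := by
        rw [← hns, sq, ← Quaternion.normSq_eq_norm_mul_self]
      rw [Complex.norm_def, Complex.normSq_apply]
      rw [show z.re * z.re + z.im * z.im = z.re ^ 2 + z.im ^ 2 by ring, ← this,
        Real.sqrt_sq (norm_nonneg _)]
    · intro x y
      rw [Complex.liftAux_apply]
      simp [QuaternionAlgebra.coe_algebraMap]
  by_cases him : q.imI = 0 ∧ q.imJ = 0 ∧ q.imK = 0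
  · obtain ⟨φ, hφ, happ⟩ := key ⟨0, 1, 0, 0⟩ rfl (by norm_num)
    refine ⟨φ, hφ, ⟨q.re, 0⟩, ?_⟩
    rw [happ]
    ext <;> simp [him.1, him.2.1, him.2.2] <;> (show (_ : ℝ) • (_ : ℝ) = _) <;> simp
  · set y : ℝ := Real.sqrt (q.imI ^ 2 + q.imJ ^ 2 + q.imK ^ 2) with hy
    have hy2 : q.imI ^ 2 + q.imJ ^ 2 + q.imK ^ 2 > 0 := by
      rcases not_and_or.mp him with h | h
      · positivity
      rcases not_and_or.mp h with h | h <;> positivity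
    have hy0 : 0 < y := Real.sqrt_pos.mpr hy2
    have hysq : y ^ 2 = q.imI ^ 2 + q.imJ ^ 2 + q.imK ^ 2 := Real.sq_sqrt hy2.le
    obtain ⟨φ, hφ, happ⟩ := key ⟨0, q.imI / y, q.imJ / y, q.imK / y⟩ rfl (by
      field_simp
      linarith [hysq])
    refine ⟨φ, hφ, ⟨q.re, y⟩, ?_⟩
    rw [happ]
    ext <;> simp <;> (show (_ : ℝ) • (_ : ℝ) = _) <;> simp <;> field_simp

/-- Maximum modulus principle for quaternionic power series. -/
lemma maxmod (c : ℕ → ℍ) {ρ₀ s : ℝ} (hρ : s < ρ₀)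
    (hc : Summable fun m => ‖c m‖ * ρ₀ ^ m) {q : ℍ} (hqs : ‖q‖ < s)
    {C : ℝ} (hC : ∀ p : ℍ, ‖p‖ = s → ‖∑' m, p ^ m * c m‖ ≤ C) :
    ‖∑' m, q ^ m * c m‖ ≤ C := by
  have hs0 : 0 < s := lt_of_le_of_lt (norm_nonneg q) hqs
  have hρ0 : 0 < ρ₀ := hs0.trans hρ
  obtain ⟨φ, hφ, z, hz⟩ := exists_slice q
  letI : Module ℂ ℍ := Module.compHom ℍ (φ.toRingHom : ℂ →+* ℍ)
  have hsmul : ∀ (w : ℂ) (x : ℍ), w • x = φ w * x := fun _ _ => rfl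
  letI : NormedSpace ℂ ℍ :=
    ⟨fun w x => by rw [hsmul, norm_mul, hφ]⟩
  set F : FormalMultilinearSeries ℂ ℂ ℍ :=
    fun k => ContinuousMultilinearMap.mkPiRing ℂ (Fin k) (c k) with hF
  have hrad : (ρ₀.toNNReal : ℝ≥0∞) ≤ F.radius := by
    apply F.le_radius_of_summable_norm
    convert hc using 2 with k
    rw [hF]
    rw [ContinuousMultilinearMap.norm_mkPiRing]
    rw [Real.coe_toNNReal _ hρ0.le]
  have hrad0 : (0 : ℝ≥0∞) < F.radius :=
    lt_of_lt_of_le (by simp [ENNReal.coe_pos, Real.toNNReal_pos.mpr hρ0]) hrad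
  have hmem : ∀ x : ℂ, ‖x‖ < ρ₀ → x ∈ EMetric.ball (0 : ℂ) F.radius := by
    intro x hx
    change x ∈ Metric.eball _ _
    rw [Metric.mem_eball, edist_dist, dist_zero_right]
    refine lt_of_lt_of_le ?_ hrad
    rw [show ((ρ₀.toNNReal : ℝ≥0∞)) = ENNReal.ofReal ρ₀ from rfl]
    exact (ENNReal.ofReal_lt_ofReal_iff hρ0).mpr hx
  have hval : ∀ x : ℂ, ‖x‖ < ρ₀ → F.sum x = ∑' m, (φ x) ^ m * c m := by
    intro x hx
    have hHS := F.hasSum (hmem x hx)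
    rw [← hHS.tsum_eq]
    refine tsum_congr fun k => ?_
    show ContinuousMultilinearMap.mkPiRing ℂ (Fin k) (c k) (fun _ => x) = (φ x) ^ k * c k
    rw [ContinuousMultilinearMap.mkPiRing_apply, Finset.prod_const, hsmul, map_pow]
    simp
  have hdiff : DiffContOnCl ℂ F.sum (Metric.ball (0 : ℂ) s) := by
    apply DifferentiableOn.diffContOnCl
    apply ((F.hasFPowerSeriesOnBall hrad0).differentiableOn).mono
    rw [closure_ball (0 : ℂ) hs0.ne']
    intro x hx
    exact hmem x (lt_of_le_of_lt (by simpa [dist_zero_right] using hx) hρ)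
  have hcl : z ∈ closure (Metric.ball (0 : ℂ) s) := by
    apply subset_closure
    rw [mem_ball, dist_zero_right, ← hφ z, hz]
    exact hqs
  have hfront : ∀ x ∈ frontier (Metric.ball (0 : ℂ) s), ‖F.sum x‖ ≤ C := by
    intro x hx
    rw [frontier_ball (0 : ℂ) hs0.ne'] at hx
    have hxs : ‖x‖ = s := by
      simpa [dist_zero_right] using hx
    rw [hval x (by rw [hxs]; exact hρ)]
    exact hC (φ x) (by rw [hφ, hxs])
  have := Complex.norm_le_of_forall_mem_frontier_norm_le isBounded_ball hdiff hfront hcl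
  rwa [hval z (by rw [← hφ z, hz]; exact hqs.trans hρ), hz] at this

/-- Uniform bound sequence for iterated convolutions. -/
def ubSeq (a : ℕ → ℍ) : ℕ → ℕ → ℝ
  | 0 => fun m => if m = 0 then 1 else 0
  | (N + 1) => fun m => ∑ i ∈ Finset.range (m + 1), (2 * ‖a i‖) * ubSeq a N (m - i)

lemma ubSeq_nonneg (a : ℕ → ℍ) (N m : ℕ) : 0 ≤ ubSeq a N m := by
  induction N generalizing m with
  | zero => dsimp [ubSeq]; split <;> norm_num
  | succ N ih =>
    dsimp [ubSeq]
    exact Finset.sum_nonneg fun i _ => mul_nonneg (by positivity) (ih _)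

lemma summable_ubSeq (a : ℕ → ℍ)
    (hconv : ∀ ρ : ℝ, 0 ≤ ρ → ρ < 1 → Summable fun n : ℕ => ‖a n‖ * ρ ^ n)
    (N : ℕ) {ρ : ℝ} (h0 : 0 ≤ ρ) (h1 : ρ < 1) :
    Summable fun m => ubSeq a N m * ρ ^ m := by
  induction N with
  | zero =>
    apply (hasSum_single (f := fun m => ubSeq a 0 m * ρ ^ m) 0 ?_).summable
    intro b hb
    dsimp [ubSeq]
    rw [if_neg hb, zero_mul]
  | succ N ih =>
    have key : (fun m => ubSeq a (N + 1) m * ρ ^ m) = fun m =>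
        ∑ i ∈ Finset.range (m + 1),
          ((2 * ‖a i‖) * ρ ^ i) * (ubSeq a N (m - i) * ρ ^ (m - i)) := by
      funext m
      dsimp [ubSeq]
      rw [Finset.sum_mul]
      refine Finset.sum_congr rfl fun i hi => ?_
      have hi' : i ≤ m := Nat.lt_succ_iff.mp (Finset.mem_range.mp hi)
      have : ρ ^ i * ρ ^ (m - i) = ρ ^ m := by
        rw [← pow_add]
        congr 1
        omega
      rw [← this]; ring
    rw [key]
    set F : ℕ → ℝ := fun i => (2 * ‖a i‖) * ρ ^ i with hFdef
    set G : ℕ → ℝ := fun i => ubSeq a N i * ρ ^ i with hGdef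
    have hF : Summable F := by
      have := (hconv ρ h0 h1).mul_left 2
      refine this.congr fun i => ?_
      simp [hFdef]; ring
    have hG : Summable G := ih
    have h := summable_norm_sum_mul_antidiagonal_of_summable_norm
      (f := F) (g := G) (by simpa using hF.abs) (by simpa using hG.abs)
    have h2 := h.of_norm
    refine h2.congr fun m => ?_
    rw [Finset.Nat.sum_antidiagonal_eq_sum_range_succ_mk]

section folds

variable (a : ℕ → ℍ) {n : ℕ} (w : Fin n → ℍ)

/-- Abbreviation for the iterated convolution over a list of pairs. -/
def foldC (L : List (Fin n × Fin n)) : ℕ → ℍ :=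
  L.foldr (fun p acc => convH (fun m => (w p.2 ^ m - w p.1 ^ m) * a m) acc) deltaH

lemma starCoeff_eq_foldC : starCoeff a w = foldC a w (pairList n) := rfl

lemma foldC_cons (p : Fin n × Fin n) (t : List (Fin n × Fin n)) :
    foldC a w (p :: t) = convH (fun m => (w p.2 ^ m - w p.1 ^ m) * a m) (foldC a w t) := rfl

lemma norm_factor_le (hw : ∀ i, ‖w i‖ ≤ 1) (p : Fin n × Fin n) (i : ℕ) :
    ‖(w p.2 ^ i - w p.1 ^ i) * a i‖ ≤ 2 * ‖a i‖ := by
  rw [norm_mul]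
  apply mul_le_mul_of_nonneg_right _ (norm_nonneg _)
  refine (norm_sub_le _ _).trans ?_
  rw [norm_pow, norm_pow]
  have h1 : ‖w p.2‖ ^ i ≤ 1 := pow_le_one₀ (norm_nonneg _) (hw _)
  have h2 : ‖w p.1‖ ^ i ≤ 1 := pow_le_one₀ (norm_nonneg _) (hw _)
  linarith

lemma norm_foldC_le (hw : ∀ i, ‖w i‖ ≤ 1) (L : List (Fin n × Fin n)) (m : ℕ) :
    ‖foldC a w L m‖ ≤ ubSeq a L.length m := by
  induction L generalizing m with
  | nil =>
    dsimp [foldC, deltaH, ubSeq]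
    split <;> simp
  | cons p t ih =>
    dsimp [foldC, convH, ubSeq] at *
    refine (norm_sum_le _ _).trans ?_
    apply Finset.sum_le_sum
    intro i _
    rw [norm_mul]
    exact mul_le_mul (norm_factor_le a w hw p i) (ih _) (norm_nonneg _) (by positivity)

lemma foldC_low (L : List (Fin n × Fin n)) :
    (∀ m, m < L.length → foldC a w L m = 0) ∧
      foldC a w L L.length = (L.map fun p => (w p.2 - w p.1) * a 1).prod := by
  induction L with
  | nil =>
    refine ⟨fun m hm => absurd hm (by simp), ?_⟩
    simp [foldC, deltaH]
  | cons p t ih =>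
    obtain ⟨ih0, ih1⟩ := ih
    have hb0 : (w p.2 ^ 0 - w p.1 ^ 0) * a 0 = 0 := by simp
    constructor
    · intro m hm
      simp only [List.length_cons] at hm
      rw [foldC_cons]
      simp only [convH]
      apply Finset.sum_eq_zero
      intro i hi
      have hi' : i ≤ m := Nat.lt_succ_iff.mp (Finset.mem_range.mp hi)
      rcases Nat.eq_zero_or_pos i with h | h
      · subst h; rw [hb0, zero_mul]
      · rw [ih0 (m - i) (by omega), mul_zero]
    · rw [foldC_cons]
      simp only [convH, List.length_cons]
      rw [Finset.sum_eq_single 1]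
      · rw [pow_one, pow_one, Nat.add_sub_cancel, ih1]
        simp
      · intro i hi hne
        have hi' : i ≤ t.length + 1 := Nat.lt_succ_iff.mp (Finset.mem_range.mp hi)
        rcases Nat.eq_zero_or_pos i with h | h
        · subst h; rw [hb0, zero_mul]
        · rw [ih0 (t.length + 1 - i) (by omega), mul_zero]
      · intro h
        exact absurd (Finset.mem_range.mpr (by omega)) h

end folds

lemma pairList_nodup (n : ℕ) : (pairList n).Nodup := by
  apply List.Nodup.filter
  exact ((List.nodup_finRange n).product (List.nodup_finRange n))

lemma pairList_toFinset (n : ℕ) :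
    (pairList n).toFinset = Finset.univ.filter (fun p : Fin n × Fin n => p.1 < p.2) := by
  ext p
  simp only [pairList, List.mem_toFinset, List.mem_filter, List.mem_flatMap, List.mem_map,
    List.mem_finRange, Finset.mem_filter, Finset.mem_univ, true_and, decide_eq_true_eq]
  constructor
  · rintro ⟨-, h⟩; exact h
  · intro h
    exact ⟨⟨p.1, p.2, rfl⟩, h⟩

lemma card_filter_lt (n : ℕ) :
    (Finset.univ.filter (fun p : Fin n × Fin n => p.1 < p.2)).card * 2 = n * (n - 1) := by
  have h1 : (Finset.univ.filter (fun p : Fin n × Fin n => p.1 < p.2)).card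
      = ∑ k : Fin n, (k : ℕ) := by
    rw [Finset.card_eq_sum_card_fiberwise
      (f := fun p : Fin n × Fin n => p.2) (t := Finset.univ) (fun x _ => Finset.mem_univ _)]
    refine Finset.sum_congr rfl fun k _ => ?_
    rw [← Fin.card_Iio k]
    apply Finset.card_bij (fun p _ => p.1)
    · intro p hp
      simp only [Finset.mem_filter, Finset.mem_univ, true_and] at hp
      rw [Finset.mem_Iio, ← hp.2]
      exact hp.1
    · intro p hp p' hp' h
      simp only [Finset.mem_filter, Finset.mem_univ, true_and] at hp hp'
      exact Prod.ext h (hp.2.trans hp'.2.symm)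
    · intro j hj
      refine ⟨(j, k), ?_, rfl⟩
      simp only [Finset.mem_filter, Finset.mem_univ, true_and, and_true]
      exact Finset.mem_Iio.mp hj
  rw [h1, Fin.sum_univ_eq_sum_range (fun i => i) n, Finset.sum_range_id_mul_two]

lemma pairList_length (n : ℕ) :
    (pairList n).length * 2 = n * (n - 1) := by
  rw [← List.toFinset_card_of_nodup (pairList_nodup n), pairList_toFinset]
  exact card_filter_lt n

/-- `(x^N)^e = x` when `N*e = 1`. -/
lemma cancel1 {x e : ℝ} {N : ℕ} (hx : 0 ≤ x) (h1 : (N : ℝ) * e = 1) : (x ^ N) ^ e = x := by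
  rw [← Real.rpow_natCast x N, ← Real.rpow_mul hx, h1, Real.rpow_one]

/-- From `x^e ≤ S` deduce `x ≤ S^N` when `N*e = 1`. -/
lemma cancel2 {x S e : ℝ} {N : ℕ} (hx : 0 ≤ x) (h1 : (N : ℝ) * e = 1)
    (h : x ^ e ≤ S) : x ≤ S ^ N := by
  have hS : 0 ≤ S := le_trans (Real.rpow_nonneg hx e) h
  have h2 : (x ^ e) ^ ((N : ℕ) : ℝ) ≤ S ^ ((N : ℕ) : ℝ) :=
    Real.rpow_le_rpow (Real.rpow_nonneg hx e) h (Nat.cast_nonneg N)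
  rwa [← Real.rpow_mul hx, show e * ((N : ℕ) : ℝ) = 1 by linarith [mul_comm e ((N : ℕ) : ℝ), h1],
    Real.rpow_one, Real.rpow_natCast] at h2

/-- Norm of a product of a mapped list of quaternions. -/
lemma norm_list_prod_map {α : Type*} (L : List α) (f : α → ℍ) :
    ‖(L.map f).prod‖ = (L.map fun x => ‖f x‖).prod := by
  induction L with
  | nil => simp
  | cons x t ih => simp [norm_mul, ih]

section mainlemmas

variable (a : ℕ → ℍ) {n : ℕ}

lemma summable_starCoeff
    (hconv : ∀ ρ : ℝ, 0 ≤ ρ → ρ < 1 → Summable fun m : ℕ => ‖a m‖ * ρ ^ m)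
    {w : Fin n → ℍ} (hw : ∀ i, ‖w i‖ ≤ 1) {ρ : ℝ} (h0 : 0 ≤ ρ) (h1 : ρ < 1) :
    Summable fun m => ‖starCoeff a w m‖ * ρ ^ m := by
  refine Summable.of_nonneg_of_le (fun m => by positivity) (fun m => ?_)
    (summable_ubSeq a hconv (pairList n).length h0 h1)
  exact mul_le_mul_of_nonneg_right
    (by rw [starCoeff_eq_foldC]; exact norm_foldC_le a w hw (pairList n) m) (by positivity)

lemma summable_term
    (hconv : ∀ ρ : ℝ, 0 ≤ ρ → ρ < 1 → Summable fun m : ℕ => ‖a m‖ * ρ ^ m)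
    {w : Fin n → ℍ} (hw : ∀ i, ‖w i‖ ≤ 1) {q : ℍ} {ρ : ℝ}
    (hq : ‖q‖ ≤ ρ) (h1 : ρ < 1) :
    Summable fun m => q ^ m * starCoeff a w m := by
  have h0 : 0 ≤ ρ := le_trans (norm_nonneg _) hq
  apply Summable.of_norm
  refine Summable.of_nonneg_of_le (fun m => norm_nonneg _) (fun m => ?_)
    (summable_starCoeff a hconv hw h0 h1)
  rw [norm_mul, norm_pow, mul_comm]
  exact mul_le_mul_of_nonneg_left (pow_le_pow_left₀ (norm_nonneg _) hq m) (norm_nonneg _)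

lemma norm_tsum_le
    (hconv : ∀ ρ : ℝ, 0 ≤ ρ → ρ < 1 → Summable fun m : ℕ => ‖a m‖ * ρ ^ m)
    {w : Fin n → ℍ} (hw : ∀ i, ‖w i‖ ≤ 1) {q : ℍ} {ρ : ℝ}
    (hq : ‖q‖ ≤ ρ) (h1 : ρ < 1) :
    ‖∑' m : ℕ, q ^ m * starCoeff a w m‖ ≤ ∑' m : ℕ, ubSeq a (pairList n).length m * ρ ^ m := by
  have h0 : 0 ≤ ρ := le_trans (norm_nonneg _) hq
  have hsum1 : Summable fun m => ‖q ^ m * starCoeff a w m‖ := by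
    refine Summable.of_nonneg_of_le (fun m => norm_nonneg _) (fun m => ?_)
      (summable_starCoeff a hconv hw h0 h1)
    rw [norm_mul, norm_pow, mul_comm]
    exact mul_le_mul_of_nonneg_left (pow_le_pow_left₀ (norm_nonneg _) hq m) (norm_nonneg _)
  refine (norm_tsum_le_tsum_norm hsum1).trans ?_
  refine Summable.tsum_le_tsum (fun m => ?_) hsum1 (summable_ubSeq a hconv _ h0 h1)
  rw [norm_mul, norm_pow, mul_comm]
  refine mul_le_mul ?_ (pow_le_pow_left₀ (norm_nonneg _) hq m) (by positivity) (ubSeq_nonneg _ _ _)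
  rw [starCoeff_eq_foldC]
  exact norm_foldC_le a w hw (pairList n) m

/-- The set whose supremum is `regDiamN`. -/
def Sset (n : ℕ) (a : ℕ → ℍ) (r : ℝ) : Set ℝ :=
  {x : ℝ | ∃ w : Fin n → ℍ, (∀ i, ‖w i‖ ≤ 1) ∧ ∃ q : ℍ, ‖q‖ ≤ r ∧
    x = ‖∑' m : ℕ, q ^ m * starCoeff a w m‖ ^ (2 / ((n : ℝ) * ((n : ℝ) - 1)))}

lemma regDiamN_eq_sSup (r : ℝ) : regDiamN n a r = sSup (Sset n a r) := rfl

lemma Sset_nonempty {r : ℝ} (hr : 0 ≤ r) : (Sset n a r).Nonempty :=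
  ⟨_, 0, fun _ => by simp, 0, by simpa using hr, rfl⟩

lemma Sset_bddAbove
    (hconv : ∀ ρ : ℝ, 0 ≤ ρ → ρ < 1 → Summable fun m : ℕ => ‖a m‖ * ρ ^ m)
    {r : ℝ} (h0 : 0 ≤ r) (h1 : r < 1) : BddAbove (Sset n a r) := by
  refine ⟨(∑' m : ℕ, ubSeq a (pairList n).length m * r ^ m) ^
    (2 / ((n : ℝ) * ((n : ℝ) - 1))), ?_⟩
  rintro x ⟨w, hw, q, hq, rfl⟩
  have he : 0 ≤ 2 / ((n : ℝ) * ((n : ℝ) - 1)) := by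
    rcases Nat.eq_zero_or_pos n with h | h
    · simp [h]
    · have : (1 : ℝ) ≤ (n : ℝ) := by exact_mod_cast h
      apply div_nonneg (by norm_num)
      nlinarith
  exact Real.rpow_le_rpow (norm_nonneg _) (norm_tsum_le a hconv hw hq h1) he

lemma regDiamN_nonneg
    (hconv : ∀ ρ : ℝ, 0 ≤ ρ → ρ < 1 → Summable fun m : ℕ => ‖a m‖ * ρ ^ m)
    {r : ℝ} (h0 : 0 ≤ r) (h1 : r < 1) : 0 ≤ regDiamN n a r := by
  obtain ⟨x, hx⟩ := Sset_nonempty a (n := n) h0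
  refine le_trans ?_ (le_csSup (Sset_bddAbove a hconv h0 h1) hx)
  obtain ⟨w, hw, q, hq, rfl⟩ := hx
  exact Real.rpow_nonneg (norm_nonneg _) _

lemma norm_tsum_le_regDiamN_pow (hn : 2 ≤ n)
    (hconv : ∀ ρ : ℝ, 0 ≤ ρ → ρ < 1 → Summable fun m : ℕ => ‖a m‖ * ρ ^ m)
    (hNe : ((pairList n).length : ℝ) * (2 / ((n : ℝ) * ((n : ℝ) - 1))) = 1)
    {w : Fin n → ℍ} (hw : ∀ i, ‖w i‖ ≤ 1) {q : ℍ} {s : ℝ}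
    (hq : ‖q‖ ≤ s) (h1 : s < 1) :
    ‖∑' m : ℕ, q ^ m * starCoeff a w m‖ ≤ (regDiamN n a s) ^ (pairList n).length := by
  have h0 : 0 ≤ s := le_trans (norm_nonneg _) hq
  have hmem : (‖∑' m : ℕ, q ^ m * starCoeff a w m‖ ^ (2 / ((n : ℝ) * ((n : ℝ) - 1))))
      ∈ Sset n a s := ⟨w, hw, q, hq, rfl⟩
  have hle := le_csSup (Sset_bddAbove a hconv h0 h1) hmem
  exact cancel2 (norm_nonneg _) hNe hle

lemma starCoeff_vanish (w : Fin n → ℍ) {m : ℕ} (hm : m < (pairList n).length) :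
    starCoeff a w m = 0 := by
  rw [starCoeff_eq_foldC]
  exact (foldC_low a w (pairList n)).1 m hm

lemma tsum_shift_factor {c : ℕ → ℍ} {N : ℕ} (hvan : ∀ m, m < N → c m = 0) {q : ℍ}
    (hsum : Summable fun m => q ^ m * c m) :
    ∑' m : ℕ, q ^ m * c m = q ^ N * ∑' m : ℕ, q ^ m * c (m + N) := by
  rw [← hsum.sum_add_tsum_nat_add N]
  have hzero : ∑ i ∈ Finset.range N, q ^ i * c i = 0 :=
    Finset.sum_eq_zero fun i hi => by rw [hvan i (Finset.mem_range.mp hi), mul_zero]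
  rw [hzero, zero_add, ← tsum_mul_left]
  refine tsum_congr fun m => ?_
  rw [pow_add, pow_mul_comm, mul_assoc]

lemma summable_shift (c : ℕ → ℍ) {ρ : ℝ} (h0 : 0 < ρ)
    (h : Summable fun m => ‖c m‖ * ρ ^ m) (N : ℕ) :
    Summable fun m => ‖c (m + N)‖ * ρ ^ m := by
  have h2 := (summable_nat_add_iff (f := fun m => ‖c m‖ * ρ ^ m) N).mpr h
  have h3 := h2.mul_right ((ρ ^ N)⁻¹)
  refine h3.congr fun m => ?_
  have : ρ ^ N ≠ 0 := by positivity
  field_simp [pow_add]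
  ring

lemma key_bound (hn : 2 ≤ n)
    (hconv : ∀ ρ : ℝ, 0 ≤ ρ → ρ < 1 → Summable fun m : ℕ => ‖a m‖ * ρ ^ m)
    (hNe : ((pairList n).length : ℝ) * (2 / ((n : ℝ) * ((n : ℝ) - 1))) = 1)
    {w : Fin n → ℍ} (hw : ∀ i, ‖w i‖ ≤ 1) {s : ℝ} (hs0 : 0 < s) (hs1 : s < 1)
    {q : ℍ} (hq : ‖q‖ < s) :
    ‖∑' m : ℕ, q ^ m * starCoeff a w (m + (pairList n).length)‖ ≤
      (regDiamN n a s) ^ (pairList n).length / s ^ (pairList n).length := by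
  set N := (pairList n).length with hN
  set ρ₀ : ℝ := (s + 1) / 2 with hρ₀
  have hsρ : s < ρ₀ := by rw [hρ₀]; linarith
  have hρ1 : ρ₀ < 1 := by rw [hρ₀]; linarith
  have hρpos : 0 < ρ₀ := lt_trans hs0 hsρ
  refine maxmod _ hsρ (summable_shift (starCoeff a w) hρpos
    (summable_starCoeff a hconv hw hρpos.le hρ1) N) hq ?_
  intro p hp
  have hps : ‖p‖ ≤ s := hp.le
  have hT := norm_tsum_le_regDiamN_pow a hn hconv hNe hw hps hs1
  have hsplit := tsum_shift_factor (c := starCoeff a w) (N := N)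
    (fun m hm => starCoeff_vanish a w hm) (summable_term a hconv hw hps hs1)
  rw [hsplit, norm_mul, norm_pow, hp] at hT
  rw [le_div_iff₀ (by positivity)]
  rw [mul_comm] at hT
  exact hT

/-- The set whose supremum is `nDiamReal`. -/
def Dset (n : ℕ) (E : Set ℍ) : Set ℝ :=
  {x : ℝ | ∃ w : Fin n → ℍ, (∀ i, w i ∈ E) ∧
    x = (∏ p ∈ Finset.univ.filter (fun p : Fin n × Fin n => p.1 < p.2), ‖w p.2 - w p.1‖) ^
      (2 / ((n : ℝ) * ((n : ℝ) - 1)))}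

lemma nDiamReal_eq_sSup (E : Set ℍ) : nDiamReal n E = sSup (Dset n E) := rfl

lemma Dset_nonempty {r : ℝ} (hr : 0 < r) : (Dset n (ball (0 : ℍ) r)).Nonempty :=
  ⟨_, 0, fun _ => by simpa using hr, rfl⟩

lemma Dset_bddAbove {r : ℝ} (hr : r ≤ 1) : BddAbove (Dset n (ball (0 : ℍ) r)) := by
  set M := (Finset.univ.filter (fun p : Fin n × Fin n => p.1 < p.2)).card with hM
  refine ⟨((2 : ℝ) ^ M) ^ (2 / ((n : ℝ) * ((n : ℝ) - 1))), ?_⟩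
  rintro x ⟨w, hw, rfl⟩
  have he : 0 ≤ 2 / ((n : ℝ) * ((n : ℝ) - 1)) := by
    rcases Nat.eq_zero_or_pos n with h | h
    · simp [h]
    · have : (1 : ℝ) ≤ (n : ℝ) := by exact_mod_cast h
      apply div_nonneg (by norm_num)
      nlinarith
  refine Real.rpow_le_rpow (Finset.prod_nonneg fun p _ => norm_nonneg _) ?_ he
  rw [hM, ← Finset.prod_const]
  refine Finset.prod_le_prod (fun p _ => norm_nonneg _) fun p _ => ?_
  have h2 : ∀ i, ‖w i‖ < r := fun i => mem_ball_zero_iff.mp (hw i)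
  calc ‖w p.2 - w p.1‖ ≤ ‖w p.2‖ + ‖w p.1‖ := norm_sub_le _ _
    _ ≤ 2 := by have := h2 p.1; have := h2 p.2; linarith

lemma Dset_elem_nonneg {E : Set ℍ} {x : ℝ} (hx : x ∈ Dset n E) : 0 ≤ x := by
  obtain ⟨w, hw, rfl⟩ := hx
  exact Real.rpow_nonneg (Finset.prod_nonneg fun p _ => norm_nonneg _) _

lemma nDiamReal_nonneg {r : ℝ} (h0 : 0 < r) (h1 : r ≤ 1) :
    0 ≤ nDiamReal n (ball (0 : ℍ) r) := by
  obtain ⟨x, hx⟩ := Dset_nonempty (n := n) h0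
  exact le_trans (Dset_elem_nonneg hx) (le_csSup (Dset_bddAbove h1) hx)

end mainlemmas

/-- Scaling of the `n`-diameter. -/
lemma nDiam_scale {n : ℕ} (hn : 2 ≤ n)
    (hMe : ((Finset.univ.filter (fun p : Fin n × Fin n => p.1 < p.2)).card : ℝ)
      * (2 / ((n : ℝ) * ((n : ℝ) - 1))) = 1)
    {r : ℝ} (h0 : 0 < r) (h1 : r ≤ 1) :
    nDiamReal n (ball (0 : ℍ) r) = nDiamReal n (ball (0 : ℍ) 1) * r := by
  set M := (Finset.univ.filter (fun p : Fin n × Fin n => p.1 < p.2)).card with hMdef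
  set e := 2 / ((n : ℝ) * ((n : ℝ) - 1)) with hedef
  have hiff : ∀ x : ℝ, x ∈ Dset n (ball (0 : ℍ) r) ↔
      ∃ y ∈ Dset n (ball (0 : ℍ) 1), x = y * r := by
    intro x
    constructor
    · rintro ⟨w, hw, rfl⟩
      set w' : Fin n → ℍ := fun i => (r⁻¹ : ℝ) • w i with hw'def
      have hw' : ∀ i, w' i ∈ ball (0 : ℍ) 1 := by
        intro i
        rw [mem_ball_zero_iff, hw'def]
        rw [norm_smul, Real.norm_eq_abs, abs_of_pos (by positivity)]
        have := mem_ball_zero_iff.mp (hw i)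
        calc r⁻¹ * ‖w i‖ < r⁻¹ * r := by
              exact mul_lt_mul_of_pos_left this (by positivity)
          _ = 1 := by field_simp
      refine ⟨_, ⟨w', hw', rfl⟩, ?_⟩
      have hscal : ∀ i, (r : ℝ) • w' i = w i := by
        intro i
        rw [hw'def]
        dsimp only
        rw [smul_smul, mul_inv_cancel₀ h0.ne', one_smul]
      have hsub : ∀ p : Fin n × Fin n, w p.2 - w p.1 = (r : ℝ) • (w' p.2 - w' p.1) := by
        intro p
        rw [smul_sub, hscal, hscal]
      have hprod : (∏ p ∈ Finset.univ.filter (fun p : Fin n × Fin n => p.1 < p.2),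
          ‖w p.2 - w p.1‖) = r ^ M *
          ∏ p ∈ Finset.univ.filter (fun p : Fin n × Fin n => p.1 < p.2), ‖w' p.2 - w' p.1‖ := by
        rw [← Finset.prod_const, ← Finset.prod_mul_distrib]
        refine Finset.prod_congr rfl fun p _ => ?_
        rw [hsub p, norm_smul, Real.norm_eq_abs, abs_of_pos h0]
      rw [hprod, Real.mul_rpow (by positivity)
        (Finset.prod_nonneg fun p _ => norm_nonneg _), cancel1 h0.le hMe, mul_comm]
    · rintro ⟨y, ⟨w, hw, rfl⟩, rfl⟩
      refine ⟨fun i => (r : ℝ) • w i, fun i => ?_, ?_⟩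
      · rw [mem_ball_zero_iff, norm_smul, Real.norm_eq_abs, abs_of_pos h0]
        have := mem_ball_zero_iff.mp (hw i)
        calc r * ‖w i‖ < r * 1 := mul_lt_mul_of_pos_left this h0
          _ = r := mul_one r
      · have hprod : (∏ p ∈ Finset.univ.filter (fun p : Fin n × Fin n => p.1 < p.2),
            ‖(r : ℝ) • w p.2 - (r : ℝ) • w p.1‖) = r ^ M *
            ∏ p ∈ Finset.univ.filter (fun p : Fin n × Fin n => p.1 < p.2),
              ‖w p.2 - w p.1‖ := by
          rw [← Finset.prod_const, ← Finset.prod_mul_distrib]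
          refine Finset.prod_congr rfl fun p _ => ?_
          rw [← smul_sub, norm_smul, Real.norm_eq_abs, abs_of_pos h0]
        rw [hprod, Real.mul_rpow (by positivity)
          (Finset.prod_nonneg fun p _ => norm_nonneg _), cancel1 h0.le hMe, mul_comm]
  have hbdd1 : BddAbove (Dset n (ball (0 : ℍ) 1)) := Dset_bddAbove le_rfl
  have hbddr : BddAbove (Dset n (ball (0 : ℍ) r)) := Dset_bddAbove h1
  have hne1 : (Dset n (ball (0 : ℍ) 1)).Nonempty := Dset_nonempty one_pos
  have hnn1 : 0 ≤ nDiamReal n (ball (0 : ℍ) 1) := nDiamReal_nonneg one_pos le_rfl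
  have hnnr : 0 ≤ nDiamReal n (ball (0 : ℍ) r) := nDiamReal_nonneg h0 h1
  rw [nDiamReal_eq_sSup, nDiamReal_eq_sSup]
  apply le_antisymm
  · apply Real.sSup_le
    · intro x hx
      obtain ⟨y, hy, rfl⟩ := (hiff x).mp hx
      exact mul_le_mul_of_nonneg_right (le_csSup hbdd1 hy) h0.le
    · exact mul_nonneg hnn1 h0.le
  · have hle : sSup (Dset n (ball (0 : ℍ) 1)) ≤ sSup (Dset n (ball (0 : ℍ) r)) / r := by
      apply Real.sSup_le
      · intro y hy
        rw [le_div_iff₀ h0]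
        exact le_csSup hbddr ((hiff (y * r)).mpr ⟨y, hy, rfl⟩)
      · exact div_nonneg hnnr h0.le
    calc sSup (Dset n (ball (0 : ℍ) 1)) * r
        ≤ (sSup (Dset n (ball (0 : ℍ) r)) / r) * r := mul_le_mul_of_nonneg_right hle h0.le
      _ = sSup (Dset n (ball (0 : ℍ) r)) := by field_simp

/-- A positive element in the `n`-diameter set of the unit ball. -/
lemma Dset_pos_elem {n : ℕ} (hn : 2 ≤ n) :
    ∃ x ∈ Dset n (ball (0 : ℍ) 1), 0 < x := by
  have hn0 : (0 : ℝ) < (n : ℝ) := by exact_mod_cast (by omega : 0 < n)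
  refine ⟨_, ⟨fun i => ((((i : ℕ) : ℝ) / (n : ℝ) : ℝ) : ℍ), fun i => ?_, rfl⟩, ?_⟩
  · rw [mem_ball_zero_iff, Quaternion.norm_coe, Real.norm_eq_abs,
      abs_of_nonneg (by positivity), div_lt_one hn0]
    exact_mod_cast i.2
  · apply Real.rpow_pos_of_pos
    apply Finset.prod_pos
    intro p hp
    have hlt : (p.1 : ℕ) < (p.2 : ℕ) := (Finset.mem_filter.mp hp).2
    have heq : ((((p.2 : ℕ) : ℝ) / (n : ℝ) : ℝ) : ℍ) - ((((p.1 : ℕ) : ℝ) / (n : ℝ) : ℝ) : ℍ)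
        = (((((p.2 : ℕ) : ℝ) - ((p.1 : ℕ) : ℝ)) / (n : ℝ) : ℝ) : ℍ) := by
      rw [← Quaternion.coe_sub]
      congr 1
      ring
    rw [heq, Quaternion.norm_coe, Real.norm_eq_abs, abs_pos]
    apply div_ne_zero _ hn0.ne'
    have h2 : ((p.1 : ℕ) : ℝ) < ((p.2 : ℕ) : ℝ) := by exact_mod_cast hlt
    intro hc
    nlinarith

lemma tsum_zero_pow_mul (c : ℕ → ℍ) : ∑' m : ℕ, (0 : ℍ) ^ m * c m = c 0 := by
  rw [tsum_eq_single 0 (fun b hb => by rw [zero_pow hb, zero_mul])]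
  simp

/-- Landau–Toeplitz inequalities for the regular `n`-diameter: if `d̃_n(f(𝔹)) = d_n(𝔹)`
then `d̃_n(f(r𝔹)) ≤ d_n(r𝔹) = d_n(𝔹)·r` for all `r ∈ (0,1)`, and `|∂_c f(0)| = |a₁| ≤ 1`. -/
theorem landau_toeplitz_nDiam (a : ℕ → ℍ)
    (hconv : ∀ ρ : ℝ, 0 ≤ ρ → ρ < 1 → Summable fun n : ℕ => ‖a n‖ * ρ ^ n)
    (n : ℕ) (hn : 2 ≤ n)
    (hd : Tendsto (regDiamN n a) (nhdsWithin 1 (Set.Iio 1))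
      (nhds (nDiamReal n (Metric.ball 0 1)))) :
    (∀ r ∈ Set.Ioo (0 : ℝ) 1,
        regDiamN n a r ≤ nDiamReal n (Metric.ball 0 r) ∧
        nDiamReal n (Metric.ball 0 r) = nDiamReal n (Metric.ball 0 1) * r) ∧
      ‖a 1‖ ≤ 1 := by
  have hn1 : 1 ≤ n := by omega
  have hn2R : (2 : ℝ) ≤ (n : ℝ) := by exact_mod_cast hn
  have hnn : (0 : ℝ) < (n : ℝ) * ((n : ℝ) - 1) := by nlinarith
  have he : (0 : ℝ) < 2 / ((n : ℝ) * ((n : ℝ) - 1)) := by positivity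
  set N := (pairList n).length with hNdef
  have hN2 : N * 2 = n * (n - 1) := pairList_length n
  have hN0 : 0 < N := by
    have h2 : 2 * 1 ≤ n * (n - 1) := Nat.mul_le_mul hn (by omega)
    omega
  have hcast : ((n * (n - 1) : ℕ) : ℝ) = (n : ℝ) * ((n : ℝ) - 1) := by
    push_cast [Nat.cast_sub hn1]
    ring
  have hNe : ((N : ℝ)) * (2 / ((n : ℝ) * ((n : ℝ) - 1))) = 1 := by
    have h : ((N : ℝ)) * 2 = (n : ℝ) * ((n : ℝ) - 1) := by
      rw [← hcast]
      exact_mod_cast hN2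
    rw [← mul_div_assoc, h, div_self hnn.ne']
  have hM : (Finset.univ.filter (fun p : Fin n × Fin n => p.1 < p.2)).card = N := by
    rw [hNdef, ← List.toFinset_card_of_nodup (pairList_nodup n), pairList_toFinset]
  have hMe : (((Finset.univ.filter (fun p : Fin n × Fin n => p.1 < p.2)).card : ℝ)
      * (2 / ((n : ℝ) * ((n : ℝ) - 1))) = 1) := by rw [hM]; exact hNe
  set D := nDiamReal n (Metric.ball (0 : ℍ) 1) with hDdef
  -- core inequality
  have hcore : ∀ r s : ℝ, 0 < r → r < s → s < 1 →
      regDiamN n a r ≤ (r / s) * regDiamN n a s := by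
    intro r s hr0 hrs hs1
    have hs0 : 0 < s := hr0.trans hrs
    have hr1 : r < 1 := hrs.trans hs1
    have hRs0 : 0 ≤ regDiamN n a s := regDiamN_nonneg a hconv hs0.le hs1
    rw [regDiamN_eq_sSup]
    apply Real.sSup_le
    · rintro x ⟨w, hw, q, hq, rfl⟩
      have hq' : ‖q‖ < s := lt_of_le_of_lt hq hrs
      have hG := key_bound a hn hconv hNe hw hs0 hs1 hq'
      have hsplit := tsum_shift_factor (c := starCoeff a w) (N := N)
        (fun m hm => starCoeff_vanish a w hm) (summable_term a hconv hw hq hr1)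
      have hT : ‖∑' m : ℕ, q ^ m * starCoeff a w m‖ ≤
          r ^ N * ((regDiamN n a s) ^ N / s ^ N) := by
        rw [hsplit, norm_mul, norm_pow]
        exact mul_le_mul (pow_le_pow_left₀ (norm_nonneg _) hq N) hG (norm_nonneg _)
          (by positivity)
      have heq : r ^ N * ((regDiamN n a s) ^ N / s ^ N) = (r * regDiamN n a s / s) ^ N := by
        rw [div_pow, mul_pow]
        ring
      calc ‖∑' m : ℕ, q ^ m * starCoeff a w m‖ ^ (2 / ((n : ℝ) * ((n : ℝ) - 1)))
          ≤ (r ^ N * ((regDiamN n a s) ^ N / s ^ N)) ^ (2 / ((n : ℝ) * ((n : ℝ) - 1))) :=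
            Real.rpow_le_rpow (norm_nonneg _) hT he.le
        _ = ((r * regDiamN n a s / s) ^ N) ^ (2 / ((n : ℝ) * ((n : ℝ) - 1))) := by rw [heq]
        _ = r * regDiamN n a s / s :=
            cancel1 (div_nonneg (mul_nonneg hr0.le hRs0) hs0.le) hNe
        _ = (r / s) * regDiamN n a s := by ring
    · exact mul_nonneg (div_nonneg hr0.le hs0.le) hRs0
  -- part 1 inequality via the limit
  have hpart1 : ∀ r : ℝ, 0 < r → r < 1 → regDiamN n a r ≤ D * r := by
    intro r h0 h1
    have hid : Tendsto (fun s : ℝ => s) (nhdsWithin 1 (Set.Iio 1)) (nhds 1) :=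
      tendsto_id.mono_left nhdsWithin_le_nhds
    have htend : Tendsto (fun s : ℝ => (r / s) * regDiamN n a s)
        (nhdsWithin 1 (Set.Iio 1)) (nhds ((r / 1) * D)) :=
      (tendsto_const_nhds.div hid one_ne_zero).mul hd
    rw [div_one] at htend
    have hge : regDiamN n a r ≤ r * D := by
      refine ge_of_tendsto htend ?_
      filter_upwards [Ioo_mem_nhdsLT_of_mem (show (1:ℝ) ∈ Ioc r 1 from ⟨h1, le_refl 1⟩)]
        with s hs
      exact hcore r s h0 hs.1 hs.2
    linarith [hge, mul_comm r D]
  -- part 2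
  have hDpos : 0 < D := by
    obtain ⟨x, hx, hxpos⟩ := Dset_pos_elem (n := n) hn
    exact lt_of_lt_of_le hxpos (le_csSup (Dset_bddAbove le_rfl) hx)
  have hpart2 : ‖a 1‖ ≤ 1 := by
    by_cases ha : ‖a 1‖ = 0
    · rw [ha]; norm_num
    have ha0 : 0 < ‖a 1‖ := lt_of_le_of_ne (norm_nonneg _) (Ne.symm ha)
    have hkey : ∀ s : ℝ, 0 < s → s < 1 → D * ‖a 1‖ ≤ regDiamN n a s / s := by
      intro s hs0 hs1
      have hRs0 : 0 ≤ regDiamN n a s := regDiamN_nonneg a hconv hs0.le hs1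
      have hstep : ∀ x ∈ Dset n (ball (0 : ℍ) 1),
          x ≤ regDiamN n a s / (s * ‖a 1‖) := by
        rintro x ⟨w, hw, rfl⟩
        have hw' : ∀ i, ‖w i‖ ≤ 1 := fun i => (mem_ball_zero_iff.mp (hw i)).le
        have hG := key_bound a hn hconv hNe hw' hs0 hs1 (q := 0) (by simpa using hs0)
        have hG0 : (∑' m : ℕ, (0 : ℍ) ^ m * starCoeff a w (m + N)) = starCoeff a w N := by
          rw [tsum_zero_pow_mul (fun m => starCoeff a w (m + N))]
          simp
        rw [hG0] at hG
        have hnorm : ‖starCoeff a w N‖ =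
            (∏ p ∈ Finset.univ.filter (fun p : Fin n × Fin n => p.1 < p.2),
              ‖w p.2 - w p.1‖) * ‖a 1‖ ^ N := by
          rw [starCoeff_eq_foldC, hNdef, (foldC_low a w (pairList n)).2]
          rw [norm_list_prod_map]
          have : ((pairList n).map fun p => ‖(w p.2 - w p.1) * a 1‖)
              = ((pairList n).map fun p => ‖w p.2 - w p.1‖ * ‖a 1‖) := by
            apply List.map_congr_left
            intro p _
            rw [norm_mul]
          rw [this, List.prod_map_mul]
          congr 1
          · rw [← pairList_toFinset, List.prod_toFinset _ (pairList_nodup n)]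
          · rw [List.map_const', List.prod_replicate]
        set P := ∏ p ∈ Finset.univ.filter (fun p : Fin n × Fin n => p.1 < p.2),
          ‖w p.2 - w p.1‖ with hPdef
        have hP0 : 0 ≤ P := Finset.prod_nonneg fun p _ => norm_nonneg _
        have hineq : P * ‖a 1‖ ^ N ≤ (regDiamN n a s) ^ N / s ^ N := by
          rw [← hnorm]; exact hG
        have hrpow : (P * ‖a 1‖ ^ N) ^ (2 / ((n : ℝ) * ((n : ℝ) - 1)))
            ≤ ((regDiamN n a s) ^ N / s ^ N) ^ (2 / ((n : ℝ) * ((n : ℝ) - 1))) :=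
          Real.rpow_le_rpow (mul_nonneg hP0 (pow_nonneg (norm_nonneg _) N)) hineq he.le
        have hL : (P * ‖a 1‖ ^ N) ^ (2 / ((n : ℝ) * ((n : ℝ) - 1)))
            = P ^ (2 / ((n : ℝ) * ((n : ℝ) - 1))) * ‖a 1‖ := by
          rw [Real.mul_rpow hP0 (by positivity), cancel1 (norm_nonneg _) hNe]
        have hR : ((regDiamN n a s) ^ N / s ^ N) ^ (2 / ((n : ℝ) * ((n : ℝ) - 1)))
            = regDiamN n a s / s := by
          rw [← div_pow, cancel1 (div_nonneg hRs0 hs0.le) hNe]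
        rw [hL, hR] at hrpow
        rw [le_div_iff₀ (mul_pos hs0 ha0)]
        calc P ^ (2 / ((n : ℝ) * ((n : ℝ) - 1))) * (s * ‖a 1‖)
            = (P ^ (2 / ((n : ℝ) * ((n : ℝ) - 1))) * ‖a 1‖) * s := by ring
          _ ≤ (regDiamN n a s / s) * s := mul_le_mul_of_nonneg_right hrpow hs0.le
          _ = regDiamN n a s := by field_simp
      have hD1 : D ≤ regDiamN n a s / (s * ‖a 1‖) := by
        rw [hDdef, nDiamReal_eq_sSup]
        exact Real.sSup_le hstep (div_nonneg hRs0 (mul_pos hs0 ha0).le)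
      have h2 := (le_div_iff₀ (mul_pos hs0 ha0)).mp hD1
      rw [le_div_iff₀ hs0]
      nlinarith
    have hid : Tendsto (fun s : ℝ => s) (nhdsWithin 1 (Set.Iio 1)) (nhds 1) :=
      tendsto_id.mono_left nhdsWithin_le_nhds
    have htend : Tendsto (fun s : ℝ => regDiamN n a s / s)
        (nhdsWithin 1 (Set.Iio 1)) (nhds (D / 1)) := hd.div hid one_ne_zero
    rw [div_one] at htend
    have hfin : D * ‖a 1‖ ≤ D := by
      refine ge_of_tendsto htend ?_
      filter_upwards [Ioo_mem_nhdsLT_of_mem (show (1:ℝ) ∈ Ioc 0 1 from ⟨one_pos, le_refl 1⟩)]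
        with s hs
      exact hkey s hs.1 hs.2
    nlinarith
  refine ⟨fun r hr => ?_, hpart2⟩
  have hscale := nDiam_scale hn hMe hr.1 hr.2.le
  refine ⟨?_, hscale⟩
  rw [hscale]
  exact hpart1 r hr.1 hr.2
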